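/- arXiv:2211.05515 — 3 statements merged into one kernel-verified Lean document; each statement's English description precedes it below -/
import Mathlib

section
/- For any nonzero complex numbers z₁ and z₂, the defect in the triangle inequality satisfies | |z₁ + z₂| − (|z₁| + |z₂|) | ≤ ((1 − cos φ)/2) · (|z₁| + |z₂|), where φ = arg(z₁/z₂). -/
open Complex

theorem stmt_0 (z₁ z₂ : ℂ) (h₁ : z₁ ≠ 0) (h₂ : z₂ ≠ 0) :
    |‖z₁ + z₂‖ - (‖z₁‖ + ‖z₂‖)| ≤
      ((1 - Real.cos (Complex.arg (z₁ / z₂))) / 2) * (‖z₁‖ + ‖z₂‖) := by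
  set a := ‖z₁‖ with ha
  set b := ‖z₂‖ with hb
  set c := Real.cos (Complex.arg (z₁ / z₂)) with hcdef
  have ha0 : 0 < a := norm_pos_iff.mpr h₁
  have hb0 : 0 < b := norm_pos_iff.mpr h₂
  have hc1 : c ≤ 1 := Real.cos_le_one _
  have hcm1 : -1 ≤ c := Real.neg_one_le_cos _
  have hz : z₁ / z₂ ≠ 0 := div_ne_zero h₁ h₂
  have hcos : c = (z₁ / z₂).re / (a / b) := by
    rw [hcdef, Complex.cos_arg hz, norm_div]
  have hre : (z₁ * starRingEnd ℂ z₂).re = (z₁ / z₂).re * Complex.normSq z₂ := by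
    have : z₁ * starRingEnd ℂ z₂ = (z₁ / z₂) * (Complex.normSq z₂ : ℂ) := by
      field_simp
      rw [mul_comm (starRingEnd ℂ z₂) z₂, Complex.mul_conj]
    rw [this]
    simp [Complex.mul_re]
  have key : (‖z₁ + z₂‖)^2 = a^2 + b^2 + 2*a*b*c := by
    have h1 : (‖z₁ + z₂‖)^2 = Complex.normSq (z₁ + z₂) := Complex.sq_norm _
    have h2 : Complex.normSq (z₁ + z₂) = Complex.normSq z₁ + Complex.normSq z₂ +
        2 * (z₁ * starRingEnd ℂ z₂).re := Complex.normSq_add _ _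
    have h3 : Complex.normSq z₁ = a^2 := (Complex.sq_norm z₁).symm
    have h4 : Complex.normSq z₂ = b^2 := (Complex.sq_norm z₂).symm
    have hcab : c * a = (z₁ / z₂).re * b := by
      rw [hcos]; field_simp
    rw [h1, h2, h3, h4, hre, h4]
    nlinarith [hcab]
  have habs0 : 0 ≤ ‖z₁ + z₂‖ := norm_nonneg _
  have hlow : (1 + c)/2 * (a + b) ≤ ‖z₁ + z₂‖ := by
    have hsq : ((1 + c)/2 * (a + b))^2 ≤ (‖z₁ + z₂‖)^2 := by
      rw [key]
      have h1c : (0:ℝ) ≤ 1 - c := by linarith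
      have h1pc : (0:ℝ) ≤ 1 + c := by linarith
      nlinarith [mul_nonneg (mul_nonneg h1c h1pc) (sq_nonneg (a + b)),
        mul_nonneg h1c (sq_nonneg (a - b)), mul_pos ha0 hb0]
    nlinarith [hsq, habs0]
  have hup : ‖z₁ + z₂‖ ≤ a + b := norm_add_le _ _
  rw [abs_of_nonpos (by linarith)]
  linarith
end

section
/- Given n ≥ 3 positive real numbers a₁, …, aₙ such that each aᵢ is strictly less than the sum of the others, there exist n distinct points A₀, A₁, …, A_{n−1} on a common circle in the plane ℝ² (equivalently ℂ) such that |A₀A₁| = a₁, |A₁A₂| = a₂, …, |A_{n−2}A_{n−1}| = a_{n−1}, and |A_{n−1}A₀| = aₙ. -/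
open Finset Filter Topology

theorem chord (t s : ℝ) : ‖Complex.exp (t * Complex.I) - Complex.exp (s * Complex.I)‖
    = 2 * |Real.sin ((t - s) / 2)| := by
  have h1 : (Complex.exp (t * Complex.I) - Complex.exp (s * Complex.I)).re = Real.cos t - Real.cos s := by
    simp [Complex.exp_ofReal_mul_I_re]
  have h2 : (Complex.exp (t * Complex.I) - Complex.exp (s * Complex.I)).im = Real.sin t - Real.sin s := by
    simp [Complex.exp_ofReal_mul_I_im]
  have hsq : (‖Complex.exp (t * Complex.I) - Complex.exp (s * Complex.I)‖)^2
      = (2 * |Real.sin ((t - s) / 2)|)^2 := by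
    rw [Complex.sq_norm, Complex.normSq_apply, h1, h2, mul_pow, sq_abs]
    have hc : Real.cos (t - s) = Real.cos t * Real.cos s + Real.sin t * Real.sin s := Real.cos_sub t s
    have hh : Real.cos (2 * ((t - s)/2)) = 1 - 2 * Real.sin ((t - s)/2) ^ 2 := by
      rw [Real.cos_two_mul', Real.cos_sq']; ring
    have h3 : 2 * ((t - s)/2) = t - s := by ring
    rw [h3] at hh
    have pt := Real.sin_sq_add_cos_sq t
    have ps := Real.sin_sq_add_cos_sq s
    nlinarith [hc, hh]
  have hnn : 0 ≤ 2 * |Real.sin ((t - s) / 2)| := by positivity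
  nlinarith [norm_nonneg (Complex.exp (t * Complex.I) - Complex.exp (s * Complex.I))]

theorem tendsto_theta_zero (a : ℝ) :
    Tendsto (fun r : ℝ => 2 * Real.arcsin (a / (2 * r))) atTop (𝓝 0) := by
  have h1 : Tendsto (fun r : ℝ => a / (2 * r)) atTop (𝓝 0) := by
    have : (fun r : ℝ => a / (2 * r)) = fun r : ℝ => (a / 2) * r⁻¹ := by
      funext r; field_simp
    rw [this]
    simpa using tendsto_inv_atTop_zero.const_mul (a / 2)
  have h2 := (Real.continuous_arcsin.tendsto 0).comp h1
  rw [Real.arcsin_zero] at h2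
  simpa using h2.const_mul 2

theorem tendsto_r_theta (a : ℝ) (ha : 0 < a) :
    Tendsto (fun r : ℝ => r * (2 * Real.arcsin (a / (2 * r)))) atTop (𝓝 a) := by
  have hd : HasDerivAt Real.arcsin 1 0 := by
    have := Real.hasDerivAt_arcsin (by norm_num : (0:ℝ) ≠ -1) (by norm_num : (0:ℝ) ≠ 1)
    simpa using this
  have hslope := hasDerivAt_iff_tendsto_slope.mp hd
  have hu : Tendsto (fun r : ℝ => a / (2 * r)) atTop (𝓝[≠] (0:ℝ)) := by
    rw [tendsto_nhdsWithin_iff]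
    constructor
    · have : (fun r : ℝ => a / (2 * r)) = fun r : ℝ => (a / 2) * r⁻¹ := by
        funext r; field_simp
      rw [this]
      simpa using tendsto_inv_atTop_zero.const_mul (a / 2)
    · filter_upwards [eventually_gt_atTop (0:ℝ)] with r hr
      have : 0 < a / (2 * r) := by positivity
      simpa using this.ne'
  have hcomp : Tendsto (fun r : ℝ => slope Real.arcsin 0 (a / (2 * r))) atTop (𝓝 1) :=
    hslope.comp hu
  have hmul := hcomp.const_mul a
  rw [mul_one] at hmul
  apply hmul.congr'
  filter_upwards [eventually_gt_atTop (0:ℝ)] with r hr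
  have hu' : a / (2 * r) ≠ 0 := by positivity
  rw [slope_def_field]
  field_simp
  rw [Real.arcsin_zero, mul_zero, sub_zero, sub_zero, mul_div_cancel_left₀ _ ha.ne']

theorem exists_delta (n : ℕ) (hn : 3 ≤ n) (a : Fin n → ℝ) (hpos : ∀ i, 0 < a i)
    (hpoly : ∀ i, a i < ∑ j ∈ Finset.univ.erase i, a j) :
    ∃ (r : ℝ) (δ : Fin n → ℝ), 0 < r ∧ (∀ i, 0 < δ i) ∧ (∀ i, δ i < 2 * Real.pi) ∧
      (∑ i, δ i = 2 * Real.pi) ∧ (∀ i, 2 * r * Real.sin (δ i / 2) = a i) := by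
  have hne : (Finset.univ : Finset (Fin n)).Nonempty := ⟨⟨0, by omega⟩, Finset.mem_univ _⟩
  obtain ⟨i0, -, hmax⟩ := Finset.exists_max_image Finset.univ a hne
  have hmax' : ∀ i, a i ≤ a i0 := fun i => hmax i (Finset.mem_univ i)
  set M := a i0 with hM
  have hM0 : 0 < M := hpos i0
  set θ : ℝ → Fin n → ℝ := fun r i => 2 * Real.arcsin (a i / (2 * r)) with hθ
  set S : ℝ → ℝ := fun r => ∑ i, θ r i with hS
  have hpi := Real.pi_pos
  -- continuity
  have hθcont : ∀ i, ContinuousOn (fun r => θ r i) (Set.Ici (M / 2)) := by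
    intro i
    apply ContinuousOn.mul continuousOn_const
    apply Real.continuous_arcsin.comp_continuousOn
    apply ContinuousOn.div continuousOn_const
    · exact (continuous_const.mul continuous_id).continuousOn
    · intro r hr
      have h1 : M / 2 ≤ r := hr
      have : (0:ℝ) < 2 * r := by linarith
      exact this.ne'
  have hScont : ContinuousOn S (Set.Ici (M / 2)) :=
    continuousOn_finset_sum _ fun i _ => hθcont i
  -- basic bounds for r ≥ M/2
  have hfrac : ∀ r, M / 2 ≤ r → ∀ i, 0 < a i / (2 * r) ∧ a i / (2 * r) ≤ 1 := by
    intro r hr i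
    have hr0 : 0 < r := by linarith
    constructor
    · exact div_pos (hpos i) (by linarith)
    · rw [div_le_one (by linarith)]
      linarith [hmax' i]
  have hθi0M : θ (M / 2) i0 = Real.pi := by
    have : a i0 / (2 * (M / 2)) = 1 := by
      rw [hM]; field_simp; exact div_self (hpos i0).ne'
    simp only [hθ, this, Real.arcsin_one]
    ring
  have hchordθ : ∀ r, M / 2 ≤ r → ∀ i, 2 * r * Real.sin (θ r i / 2) = a i := by
    intro r hr i
    have hr0 : 0 < r := by linarith
    obtain ⟨h1, h2⟩ := hfrac r hr i
    have : θ r i / 2 = Real.arcsin (a i / (2 * r)) := by rw [hθ]; ring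
    rw [this, Real.sin_arcsin (by linarith) h2]
    field_simp
  have hθpos : ∀ r, M / 2 ≤ r → ∀ i, 0 < θ r i := by
    intro r hr i
    obtain ⟨h1, h2⟩ := hfrac r hr i
    have := Real.arcsin_pos.mpr h1
    simp only [hθ]; linarith
  have hθlepi : ∀ r, M / 2 ≤ r → ∀ i, θ r i ≤ Real.pi := by
    intro r hr i
    have := Real.arcsin_le_pi_div_two (a i / (2 * r))
    simp only [hθ]; linarith
  rcases le_or_gt (2 * Real.pi) (S (M / 2)) with hcase | hcase
  · -- Case A
    have htend : Tendsto S atTop (𝓝 0) := by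
      have := tendsto_finset_sum (Finset.univ : Finset (Fin n))
        (fun i _ => tendsto_theta_zero (a i))
      simpa using this
    have hev : ∀ᶠ r in atTop, S r < 2 * Real.pi := by
      apply htend.eventually_lt_const; positivity
    obtain ⟨R, hR1, hR2⟩ := ((eventually_ge_atTop (M / 2)).and hev).exists
    have hIVT := intermediate_value_Icc' hR1 (hScont.mono (Set.Icc_subset_Ici_self))
    have h2pi : 2 * Real.pi ∈ Set.Icc (S R) (S (M / 2)) := ⟨hR2.le, hcase⟩
    obtain ⟨r, hrmem, hSr⟩ := hIVT h2pi
    have hrge : M / 2 ≤ r := hrmem.1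
    refine ⟨r, θ r, by linarith, hθpos r hrge, ?_, hSr, hchordθ r hrge⟩
    intro i
    have := hθlepi r hrge i
    linarith
  · -- Case B
    set g : ℝ → ℝ := fun r => S r - 2 * θ r i0 with hg
    have hgM : g (M / 2) < 0 := by
      simp only [hg, hθi0M]
      linarith
    have hL : 0 < ∑ i, a i - 2 * a i0 := by
      have := hpoly i0
      have hsum : a i0 + ∑ j ∈ Finset.univ.erase i0, a j = ∑ j, a j :=
        Finset.add_sum_erase _ _ (Finset.mem_univ i0)
      linarith
    have htend2 : Tendsto (fun r => r * g r) atTop (𝓝 (∑ i, a i - 2 * a i0)) := by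
      have h1 : Tendsto (fun r => ∑ i, r * θ r i) atTop (𝓝 (∑ i, a i)) := by
        apply tendsto_finset_sum
        intro i _
        exact tendsto_r_theta (a i) (hpos i)
      have h2 := (tendsto_r_theta (a i0) (hpos i0)).const_mul 2
      have h3 := h1.sub h2
      apply h3.congr
      intro x
      show ∑ i, x * θ x i - 2 * (x * θ x i0) = x * g x
      simp only [hg, hS, mul_sub, Finset.mul_sum]
      ring
    have hev : ∀ᶠ r in atTop, 0 < g r := by
      have h1 : ∀ᶠ r in atTop, 0 < r * g r := htend2.eventually_const_lt hL
      filter_upwards [h1, eventually_gt_atTop (0:ℝ)] with r h1 h2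
      by_contra h
      push_neg at h
      nlinarith
    obtain ⟨R, hR1, hR2⟩ := ((eventually_ge_atTop (M / 2)).and hev).exists
    have hgcont : ContinuousOn g (Set.Ici (M / 2)) :=
      hScont.sub (continuousOn_const.mul (hθcont i0))
    have hIVT := intermediate_value_Icc hR1 (hgcont.mono (Set.Icc_subset_Ici_self))
    have h0 : (0:ℝ) ∈ Set.Icc (g (M / 2)) (g R) := ⟨hgM.le, hR2.le⟩
    obtain ⟨r, hrmem, hgr⟩ := hIVT h0
    have hrge : M / 2 ≤ r := hrmem.1
    have hrgt : M / 2 < r := by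
      rcases eq_or_lt_of_le hrge with h | h
      · exfalso; rw [← h] at hgr; linarith
      · exact h
    have hr0 : 0 < r := by linarith
    have hfraclt : ∀ i, a i / (2 * r) < 1 := by
      intro i
      rw [div_lt_one (by linarith)]
      linarith [hmax' i]
    have hθltpi : ∀ i, θ r i < Real.pi := by
      intro i
      have := Real.arcsin_lt_pi_div_two.mpr (hfraclt i)
      simp only [hθ]; linarith
    set δ : Fin n → ℝ := fun i => if i = i0 then 2 * Real.pi - θ r i0 else θ r i with hδ
    have hsumδ : ∑ i, δ i = 2 * Real.pi := by
      have e1 : δ i0 + ∑ j ∈ Finset.univ.erase i0, δ j = ∑ j, δ j :=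
        Finset.add_sum_erase _ _ (Finset.mem_univ i0)
      have e2 : θ r i0 + ∑ j ∈ Finset.univ.erase i0, θ r j = S r :=
        Finset.add_sum_erase _ _ (Finset.mem_univ i0)
      have e3 : ∑ j ∈ Finset.univ.erase i0, δ j = ∑ j ∈ Finset.univ.erase i0, θ r j := by
        apply Finset.sum_congr rfl
        intro j hj
        have : j ≠ i0 := (Finset.mem_erase.mp hj).1
        simp [hδ, this]
      have e4 : δ i0 = 2 * Real.pi - θ r i0 := by simp [hδ]
      simp only [hg] at hgr
      linarith
    refine ⟨r, δ, hr0, ?_, ?_, hsumδ, ?_⟩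
    · intro i
      rcases eq_or_ne i i0 with h | h
      · subst h
        simp only [hδ, if_pos rfl]
        linarith [hθltpi i]
      · simp only [hδ, if_neg h]
        exact hθpos r hrge i
    · intro i
      rcases eq_or_ne i i0 with h | h
      · subst h
        simp only [hδ, if_pos rfl]
        linarith [hθpos r hrge i]
      · simp only [hδ, if_neg h]
        linarith [hθltpi i]
    · intro i
      rcases eq_or_ne i i0 with h | h
      · subst h
        simp only [hδ, if_pos rfl]
        have : (2 * Real.pi - θ r i) / 2 = Real.pi - θ r i / 2 := by ring
        rw [this, Real.sin_pi_sub]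
        exact hchordθ r hrge i
      · simp only [hδ, if_neg h]
        exact hchordθ r hrge i

theorem construct (n : ℕ) (hn : 3 ≤ n) (a : Fin n → ℝ) (r : ℝ) (hr : 0 < r)
    (δ : Fin n → ℝ) (hdpos : ∀ i, 0 < δ i) (hdlt : ∀ i, δ i < 2 * Real.pi)
    (hsum : ∑ i, δ i = 2 * Real.pi)
    (hchord : ∀ i, 2 * r * Real.sin (δ i / 2) = a i) :
    ∃ A : Fin n → ℂ, Function.Injective A ∧
      (∃ (c : ℂ) (r : ℝ), 0 < r ∧ ∀ i, dist (A i) c = r) ∧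
      ∀ i : Fin n, dist (A i) (A (i + ⟨1, by linarith⟩)) = a i := by
  set δ' : ℕ → ℝ := fun j => if h : j < n then δ ⟨j, h⟩ else 0 with hδ'
  have hδ'nonneg : ∀ j, 0 ≤ δ' j := by
    intro j; simp only [hδ']; split
    · exact (hdpos _).le
    · exact le_refl _
  have hδ'pos : ∀ j, j < n → 0 < δ' j := by
    intro j hj; simp only [hδ', dif_pos hj]; exact hdpos _
  set φ : ℕ → ℝ := fun k => ∑ j ∈ Finset.range k, δ' j with hφ
  have hφ0 : φ 0 = 0 := by simp [hφ]
  have hφmono : ∀ k l, k < l → k < n → φ k < φ l := by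
    intro k l hkl hkn
    have h1 : φ k + δ' k ≤ φ l := by
      have : φ (k+1) ≤ φ l := by
        apply Finset.sum_le_sum_of_subset_of_nonneg
        · exact Finset.range_subset_range.2 hkl
        · intro j _ _; exact hδ'nonneg j
      simpa [hφ, Finset.sum_range_succ] using this
    linarith [hδ'pos k hkn]
  have hφmono' : ∀ k l, k ≤ l → φ k ≤ φ l := by
    intro k l hkl
    apply Finset.sum_le_sum_of_subset_of_nonneg (Finset.range_subset_range.2 hkl)
    intro j _ _; exact hδ'nonneg j
  have hφn : φ n = 2 * Real.pi := by
    rw [← hsum]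
    show ∑ j ∈ Finset.range n, δ' j = ∑ i : Fin n, δ i
    rw [← Fin.sum_univ_eq_sum_range]
    exact Finset.sum_congr rfl fun i _ => by simp [hδ', i.isLt]
  have hφnonneg : ∀ k, 0 ≤ φ k := by
    intro k; exact Finset.sum_nonneg fun j _ => hδ'nonneg j
  have hφlt : ∀ k, k < n → φ k < 2 * Real.pi := by
    intro k hk; rw [← hφn]; exact hφmono k n hk hk
  set A : Fin n → ℂ := fun i => (r : ℂ) * Complex.exp ((φ i.val : ℂ) * Complex.I) with hA
  have hdistAB : ∀ i j : Fin n, dist (A i) (A j) = 2 * r * |Real.sin ((φ i.val - φ j.val) / 2)| := by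
    intro i j
    rw [Complex.dist_eq, hA]
    have : (r : ℂ) * Complex.exp ((φ i.val : ℂ) * Complex.I) - (r : ℂ) * Complex.exp ((φ j.val : ℂ) * Complex.I)
        = (r : ℂ) * (Complex.exp ((φ i.val : ℂ) * Complex.I) - Complex.exp ((φ j.val : ℂ) * Complex.I)) := by ring
    rw [this, norm_mul, Complex.norm_real, Real.norm_eq_abs, abs_of_pos hr, chord]
    ring
  refine ⟨A, ?_, ⟨0, r, hr, ?_⟩, ?_⟩
  · intro i j hij
    have hrne : (r : ℂ) ≠ 0 := by exact_mod_cast hr.ne'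
    have hexp : Complex.exp ((φ i.val : ℂ) * Complex.I) = Complex.exp ((φ j.val : ℂ) * Complex.I) := by
      simp only [hA] at hij
      exact mul_left_cancel₀ hrne hij
    have h1 : Complex.exp (((φ i.val : ℂ) - φ j.val) * Complex.I) = 1 := by
      rw [sub_mul, Complex.exp_sub, hexp, div_self (Complex.exp_ne_zero _)]
    rw [Complex.exp_eq_one_iff] at h1
    obtain ⟨k, hk⟩ := h1
    have hk' : (φ i.val : ℝ) - φ j.val = k * (2 * Real.pi) := by
      have h3 : ((φ i.val - φ j.val : ℝ) : ℂ) * Complex.I = ((k * (2 * Real.pi) : ℝ) : ℂ) * Complex.I := by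
        push_cast
        linear_combination hk
      have h2 := mul_right_cancel₀ Complex.I_ne_zero h3
      exact_mod_cast h2
    have hbound : |(φ i.val : ℝ) - φ j.val| < 2 * Real.pi := by
      have hi := hφlt i.val i.isLt
      have hj := hφlt j.val j.isLt
      have hi' := hφnonneg i.val
      have hj' := hφnonneg j.val
      rw [abs_lt]; constructor <;> linarith
    have hk0 : k = 0 := by
      by_contra hk0
      have : (1 : ℝ) ≤ |(k : ℝ)| := by
        have : (1 : ℤ) ≤ |k| := Int.one_le_abs hk0
        exact_mod_cast this
      have hpi := Real.pi_pos
      rw [hk'] at hbound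
      rw [abs_mul] at hbound
      have : |(2 * Real.pi : ℝ)| = 2 * Real.pi := abs_of_pos (by linarith)
      nlinarith [abs_nonneg ((k:ℝ))]
    have hk'' : φ i.val = φ j.val := by
      rw [hk0] at hk'; push_cast at hk'; linarith
    have hval : i.val = j.val := by
      by_contra hne
      rcases Nat.lt_or_ge i.val j.val with h | h
      · have := hφmono i.val j.val h i.isLt; linarith
      · have h' : j.val < i.val := by omega
        have := hφmono j.val i.val h' j.isLt; linarith
    exact Fin.ext hval
  · intro i
    rw [hA]
    simp only [dist_zero_right]
    rw [norm_mul]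
    have : ‖Complex.exp ((φ i.val : ℂ) * Complex.I)‖ = 1 := by
      have : ((φ i.val : ℝ) : ℂ) * Complex.I = (φ i.val : ℝ) * Complex.I := rfl
      rw [Complex.norm_exp_ofReal_mul_I]
    rw [this, mul_one, Complex.norm_real, Real.norm_eq_abs, abs_of_pos hr]
  · intro i
    have h1n : (1 : ℕ) < n := by omega
    have hadd : (i + (⟨1, by omega⟩ : Fin n)).val = (i.val + 1) % n := by
      simp [Fin.add_def]
    have hsin_pos : 0 ≤ Real.sin (δ i / 2) := by
      apply Real.sin_nonneg_of_nonneg_of_le_pi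
      · linarith [hdpos i]
      · linarith [hdlt i, Real.pi_pos]
    rcases Nat.lt_or_ge (i.val + 1) n with hlt | hge
    · have hmod : (i.val + 1) % n = i.val + 1 := Nat.mod_eq_of_lt hlt
      rw [hdistAB, hadd, hmod]
      have hstep : φ (i.val + 1) = φ i.val + δ' i.val := by
        simp [hφ, Finset.sum_range_succ]
      have hδi : δ' i.val = δ i := by simp [hδ', i.isLt]
      rw [hstep, hδi]
      have : (φ i.val - (φ i.val + δ i)) / 2 = -(δ i / 2) := by ring
      rw [this, Real.sin_neg, abs_neg, abs_of_nonneg hsin_pos]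
      exact hchord i
    · have hieq : i.val = n - 1 := by omega
      have hmod : (i.val + 1) % n = 0 := by
        rw [hieq]
        have hne : n - 1 + 1 = n := by omega
        rw [hne, Nat.mod_self]
      rw [hdistAB, hadd, hmod, hφ0]
      have hstep : φ n = φ (n-1) + δ' (n-1) := by
        have : n = (n-1) + 1 := by omega
        rw [this]
        simp [hφ, Finset.sum_range_succ]
      have hδi : δ' (n-1) = δ i := by
        have : (⟨n-1, by omega⟩ : Fin n) = i := Fin.ext (by simp [hieq])
        simp [hδ', (by omega : n - 1 < n)]
        rw [show (⟨n-1, by omega⟩ : Fin n) = i from this]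
      have hφi : φ i.val = 2 * Real.pi - δ i := by
        rw [hieq]
        have := hstep
        rw [hφn, hδi] at this
        linarith
      rw [hφi]
      have : (2 * Real.pi - δ i - 0) / 2 = Real.pi - δ i / 2 := by ring
      rw [this, Real.sin_pi_sub, abs_of_nonneg hsin_pos]
      exact hchord i

theorem stmt_4 (n : ℕ) (hn : 3 ≤ n) (a : Fin n → ℝ) (hpos : ∀ i, 0 < a i)
    (hpoly : ∀ i, a i < ∑ j ∈ Finset.univ.erase i, a j) :
    ∃ A : Fin n → ℂ, Function.Injective A ∧
      (∃ (c : ℂ) (r : ℝ), 0 < r ∧ ∀ i, dist (A i) c = r) ∧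
      ∀ i : Fin n, dist (A i) (A (i + ⟨1, by omega⟩)) = a i := by
  obtain ⟨r, δ, hr, hdpos, hdlt, hsum, hchord⟩ := exists_delta n hn a hpos hpoly
  exact construct n hn a r hr δ hdpos hdlt hsum hchord
end

section
/- Let γ : ℝ → ℂ be continuous, 2π-periodic, and injective on [0, 2π) (i.e., a parametrization of a Jordan curve). Suppose (σᵢ^(m))_{i=0..n} are sequences with 0 = σ₀^(m) ≤ σ₁^(m) ≤ … ≤ σₙ^(m) = 2π converging to limits σᵢ* ∈ [0, 2π], and suppose |γ(σᵢ^(m)) − γ(σ_{i−1}^(m))| → 0 for each i = 1, …, n. Then for each i, either σᵢ* − σ_{i−1}* = 0 or σᵢ* − σ_{i−1}* = 2π. -/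
open Filter Real

theorem stmt_11 (γ : ℝ → ℂ) (hcont : Continuous γ)
    (hper : Function.Periodic γ (2 * Real.pi))
    (hinj : Set.InjOn γ (Set.Ico 0 (2 * Real.pi)))
    (n : ℕ) (σ : ℕ → Fin (n + 1) → ℝ) (σstar : Fin (n + 1) → ℝ)
    (hzero : ∀ m, σ m 0 = 0)
    (hlast : ∀ m, σ m (Fin.last n) = 2 * Real.pi)
    (hmono : ∀ m, Monotone (σ m))
    (hconv : ∀ i, Tendsto (fun m => σ m i) atTop (nhds (σstar i)))
    (hrange : ∀ i, σstar i ∈ Set.Icc 0 (2 * Real.pi))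
    (hsmall : ∀ i : Fin n,
      Tendsto (fun m => ‖γ (σ m i.succ) - γ (σ m i.castSucc)‖) atTop (nhds 0)) :
    ∀ i : Fin n, σstar i.succ - σstar i.castSucc = 0 ∨
      σstar i.succ - σstar i.castSucc = 2 * Real.pi := by
  intro i
  set a := σstar i.succ with ha
  set b := σstar i.castSucc with hb
  have hle : b ≤ a :=
    le_of_tendsto_of_tendsto' (hconv i.castSucc) (hconv i.succ)
      (fun m => hmono m (Fin.castSucc_le_succ i))
  have h1 : Tendsto (fun m => γ (σ m i.succ) - γ (σ m i.castSucc)) atTop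
      (nhds (γ a - γ b)) :=
    ((hcont.tendsto a).comp (hconv i.succ)).sub
      ((hcont.tendsto b).comp (hconv i.castSucc))
  have h2 : Tendsto (fun m => ‖γ (σ m i.succ) - γ (σ m i.castSucc)‖)
      atTop (nhds (‖γ a - γ b‖)) :=
    (continuous_norm.tendsto _).comp h1
  have habs : ‖γ a - γ b‖ = 0 := tendsto_nhds_unique h2 (hsmall i)
  have hγeq : γ a = γ b := by simpa [sub_eq_zero] using habs
  have hb0 : 0 ≤ b := (hrange i.castSucc).1
  have ha2 : a ≤ 2 * Real.pi := (hrange i.succ).2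
  rcases lt_or_eq_of_le ha2 with halt | haeq
  · left
    have : a = b := hinj ⟨le_trans hb0 hle, halt⟩ ⟨hb0, lt_of_le_of_lt hle halt⟩ hγeq
    linarith
  · rcases lt_or_eq_of_le hle with hblt | hbeq
    · right
      have h0 : γ b = γ 0 := by
        rw [hγeq.symm, haeq]
        have := hper 0
        simpa using this
      have hpi : (0:ℝ) < 2 * Real.pi := by positivity
      have : b = 0 := hinj ⟨hb0, by linarith [haeq]⟩ ⟨le_refl 0, hpi⟩ h0
      linarith
    · left; linarith
end
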